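/- Every finite nilpotent group G of nilpotency class at most 2 has an abelian section of size at least |G|^(1/2), i.e., there exist subgroups B ⊴ A ≤ G with A/B abelian and |A/B|² ≥ |G|. -/

import Mathlib

/-- Every finite nilpotent group `G` of class at most 2 (i.e. with derived subgroup
contained in the center) has an abelian section `A/B` with `|A/B|² ≥ |G|`. -/
theorem class_two_exists_abelian_section_sq {G : Type*} [Group G] [Fintype G]
    (hG : commutator G ≤ Subgroup.center G) :
    ∃ (A : Subgroup G) (B : Subgroup A), B.Normal ∧ commutator ↥A ≤ B ∧
      Nat.card G ≤ (Nat.card (↥A ⧸ B)) ^ 2 := by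
  by_cases h : Nat.card G ≤ (Nat.card (Subgroup.center G)) ^ 2
  · refine ⟨Subgroup.center G, ⊥, inferInstance, ?_, ?_⟩
    · rw [commutator, Subgroup.commutator_le]
      intro g hg h' hh'
      simp [commutatorElement_eq_one_iff_mul_comm.mpr (Subtype.ext (Subgroup.mem_center_iff.mp h'.2 g) : g * h' = h' * g)]
    · have : Nat.card (↥(Subgroup.center G) ⧸ (⊥ : Subgroup ↥(Subgroup.center G)))
          = Nat.card (Subgroup.center G) :=
        Nat.card_congr (QuotientGroup.quotientBot (G := ↥(Subgroup.center G))).toEquiv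
      rw [this]; exact h
  · push_neg at h
    refine ⟨⊤, (Subgroup.center G).subgroupOf ⊤, inferInstance, ?_, ?_⟩
    · rw [Subgroup.subgroupOf, ← Subgroup.map_le_iff_le_comap, commutator,
        Subgroup.map_commutator]
      have : Subgroup.map (⊤ : Subgroup G).subtype ⊤ = ⊤ := by
        rw [← MonoidHom.range_eq_map, Subgroup.range_subtype]
      rw [this]
      exact hG
    · have key : Nat.card ↥(⊤ : Subgroup G) =
          Nat.card (↥(⊤: Subgroup G) ⧸ (Subgroup.center G).subgroupOf ⊤) *
          Nat.card ((Subgroup.center G).subgroupOf ⊤) :=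
        Subgroup.card_eq_card_quotient_mul_card_subgroup _
      have h1 : Nat.card ↥(⊤ : Subgroup G) = Nat.card G :=
        Nat.card_congr Subgroup.topEquiv.toEquiv
      have h2 : Nat.card ((Subgroup.center G).subgroupOf ⊤) =
          Nat.card (Subgroup.center G) :=
        Nat.card_congr (Subgroup.subgroupOfEquivOfLe le_top).toEquiv
      rw [h1, h2] at key
      have hpos : 0 < Nat.card G := Nat.card_pos
      nlinarith [key, h, hpos]
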